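/- Let 𝒪 be a discrete valuation ring with uniformizer ϖ and T a commutative 𝒪-algebra acting on a module with distinguished eigenvector F₀ having ϖ-integral structure. Suppose G = ∑_j c_j F_j is an 𝒪-linear combination of elements F_j, that G ≡ 0 mod ϖ^{M−r} (for r < M), and F₀ ≡ G mod ϖ^M with some coefficient of F₀ a ϖ-unit. Then a contradiction follows: F₀ ≡ 0 mod ϖ is impossible. Hence r ≥ M. -/

import Mathlib

/-- Abstract CAP-ideal bound: over a DVR `𝒪` with uniformizer `ϖ`, suppose
`G = ∑_j c_j F_j` (coefficientwise), `G ≡ 0 mod ϖ^{M−r}`, `F₀ ≡ G mod ϖ^M`, and some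
coefficient of `F₀` is a `ϖ`-unit.  Then `F₀ ≡ 0 mod ϖ` is impossible, hence `r ≥ M`. -/
theorem stmt_13 {𝒪 : Type*} [CommRing 𝒪] [IsDomain 𝒪] [IsDiscreteValuationRing 𝒪]
    (ϖ : 𝒪) (hϖ : Irreducible ϖ) {ι : Type*} (r M : ℕ) {m : ℕ}
    (F₀ : ι → 𝒪) (F : Fin m → ι → 𝒪) (c : Fin m → 𝒪) (G : ι → 𝒪)
    (hG : G = fun T => ∑ j, c j * F j T)
    (hGcong : ∀ T, ϖ ^ (M - r) ∣ G T)
    (hF₀cong : ∀ T, ϖ ^ M ∣ (F₀ T - G T))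
    (hunit : ∃ T, IsUnit (F₀ T)) :
    M ≤ r := by
  by_contra h
  push_neg at h
  obtain ⟨T, hT⟩ := hunit
  have h1 : ϖ ∣ G T := dvd_trans (dvd_pow_self ϖ (Nat.sub_ne_zero_of_lt h)) (hGcong T)
  have h2 : ϖ ∣ F₀ T - G T :=
    dvd_trans (dvd_pow_self ϖ (by omega : M ≠ 0)) (hF₀cong T)
  have h3 : ϖ ∣ F₀ T := by
    have := dvd_add h2 h1
    simpa using this
  exact hϖ.not_isUnit (isUnit_of_dvd_unit h3 hT)
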